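/- arXiv:1811.12329 — 3 statements merged into one kernel-verified Lean document; each statement's English description precedes it below -/
import Mathlib

section
/- Let ρ_AB be a density matrix on ℂ^{d_A} ⊗ ℂ^{d_B}. Then ρ_AB = ρ_A ⊗ ρ_B (where ρ_A, ρ_B are the reduced density matrices obtained by partial trace) if and only if there exists a density matrix σ_B on ℂ^{d_B} such that for every positive semidefinite d_A×d_A matrix Π there exists a scalar c ≥ 0 with Tr_A[(Π ⊗ I)ρ_AB] = c·σ_B. -/
open Matrix BigOperators
open scoped Kronecker ComplexOrder

noncomputable section

namespace AWD

/-- Matrix logarithm via the spectral decomposition, with the convention `log 0 = 0`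
(`Real.log 0 = 0` in Mathlib); junk value `0` on non-Hermitian matrices. -/
noncomputable def matLog {n : Type*} [Fintype n] [DecidableEq n] (A : Matrix n n ℂ) :
    Matrix n n ℂ :=
  if hA : A.IsHermitian then
    (hA.eigenvectorUnitary : Matrix n n ℂ) *
      Matrix.diagonal (fun i => (Real.log (hA.eigenvalues i) : ℂ)) *
      (star (hA.eigenvectorUnitary : Matrix n n ℂ))
  else 0

/-- von Neumann entropy `S(ρ) = −Tr[ρ log ρ]`. -/
noncomputable def vN {n : Type*} [Fintype n] [DecidableEq n] (ρ : Matrix n n ℂ) : ℝ :=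
  - ((ρ * matLog ρ).trace).re

/-- Quantum relative entropy `S(ρ‖σ) = Tr[ρ log ρ] − Tr[ρ log σ]`. -/
noncomputable def relEnt {n : Type*} [Fintype n] [DecidableEq n] (ρ σ : Matrix n n ℂ) : ℝ :=
  ((ρ * matLog ρ).trace).re - ((ρ * matLog σ).trace).re

/-- A density matrix: positive semidefinite with unit trace. -/
def IsDensityMatrix {n : Type*} [Fintype n] (ρ : Matrix n n ℂ) : Prop :=
  ρ.PosSemidef ∧ ρ.trace = 1

/-- Partial trace over the first (Alice's) tensor factor. -/
def ptraceA {a b : Type*} [Fintype a] (X : Matrix (a × b) (a × b) ℂ) : Matrix b b ℂ :=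
  fun y y' => ∑ x : a, X (x, y) (x, y')

/-- Partial trace over the second (Bob's) tensor factor. -/
def ptraceB {a b : Type*} [Fintype b] (X : Matrix (a × b) (a × b) ℂ) : Matrix a a ℂ :=
  fun x x' => ∑ y : b, X (x, y) (x', y)

/-- A POVM indexed by `ι` on system `a`. -/
structure POVM (ι a : Type*) [Fintype ι] [Fintype a] [DecidableEq a] where
  elem : ι → Matrix a a ℂ
  pos : ∀ i, (elem i).PosSemidef
  sum_eq : ∑ i, elem i = 1

variable {ι a b : Type*} [Fintype ι] [Fintype a] [DecidableEq a] [Fintype b] [DecidableEq b]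

/-- Probability `p_i = Tr[(Π_i ⊗ I) ρ_AB]` of outcome `i`. -/
noncomputable def povmProb (P : POVM ι a) (ρ : Matrix (a × b) (a × b) ℂ) (i : ι) : ℝ :=
  (((P.elem i ⊗ₖ (1 : Matrix b b ℂ)) * ρ).trace).re

/-- Post-measurement state `ρ̃_i = Tr_A[(Π_i ⊗ I) ρ_AB] / p_i` on Bob's side. -/
noncomputable def povmPost (P : POVM ι a) (ρ : Matrix (a × b) (a × b) ℂ) (i : ι) :
    Matrix b b ℂ :=
  (povmProb P ρ i)⁻¹ • ptraceA ((P.elem i ⊗ₖ (1 : Matrix b b ℂ)) * ρ)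

/-- `Σ_{i : p_i > 0} p_i S(ρ̃_i‖γ_B)`. -/
noncomputable def workSum (P : POVM ι a) (ρ : Matrix (a × b) (a × b) ℂ)
    (γB : Matrix b b ℂ) : ℝ :=
  ∑ i, if 0 < povmProb P ρ i then povmProb P ρ i * relEnt (povmPost P ρ i) γB else 0

/-- The work of assistance, a supremum over all POVMs on Alice's side. -/
noncomputable def Wa (ρ : Matrix (a × b) (a × b) ℂ) (γB : Matrix b b ℂ) (β : ℝ) : ℝ :=
  ⨆ (k : ℕ), ⨆ (P : POVM (Fin k) a), (1 / β) * workSum P ρ γB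

/-- The Henderson–Vedral measure of classical correlations
`J→(ρ_AB) = sup_{POVM} [S(ρ_B) − Σ_{i : p_i>0} p_i S(ρ̃_i)]`. -/
noncomputable def Jarrow (ρ : Matrix (a × b) (a × b) ℂ) : ℝ :=
  ⨆ (k : ℕ), ⨆ (P : POVM (Fin k) a),
    (vN (ptraceA ρ) -
      ∑ i, if 0 < povmProb P ρ i then povmProb P ρ i * vN (povmPost P ρ i) else 0)


variable {dA dB : ℕ}

lemma ptraceA_expand (ρ : Matrix (Fin dA × Fin dB) (Fin dA × Fin dB) ℂ)
    (Pi : Matrix (Fin dA) (Fin dA) ℂ) (y y' : Fin dB) :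
    ptraceA ((Pi ⊗ₖ (1 : Matrix (Fin dB) (Fin dB) ℂ)) * ρ) y y'
      = ∑ x : Fin dA, ∑ u : Fin dA, Pi x u * ρ (u, y) (x, y') := by
  simp [ptraceA, Matrix.mul_apply, Matrix.kroneckerMap_apply, Fintype.sum_prod_type,
    Matrix.one_apply, ite_mul, mul_ite, Finset.sum_ite_eq, Finset.sum_ite_eq']

lemma vecMulVec_posSemidef {n : ℕ} (v : Fin n → ℂ) :
    (Matrix.vecMulVec v (star v)).PosSemidef := by
  refine Matrix.PosSemidef.of_dotProduct_mulVec_nonneg ?_ ?_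
  · ext p q
    simp [Matrix.conjTranspose_apply, Matrix.vecMulVec_apply, mul_comm]
  · intro x
    have : star x ⬝ᵥ (Matrix.vecMulVec v (star v)) *ᵥ x
        = star (star v ⬝ᵥ x) * (star v ⬝ᵥ x) := by
      simp [dotProduct, Matrix.mulVec, Matrix.vecMulVec_apply, Finset.mul_sum,
        Finset.sum_mul, mul_comm, mul_left_comm]
      ring_nf
      rw [Finset.sum_comm]
    rw [this]
    exact star_mul_self_nonneg _

lemma diag_nonneg {n : ℕ} {M : Matrix (Fin n) (Fin n) ℂ} (h : M.PosSemidef) (i : Fin n) :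
    0 ≤ M i i := by
  have := h.dotProduct_mulVec_nonneg (Pi.single i 1)
  simpa [dotProduct, Matrix.mulVec, Pi.single_apply] using this

lemma trace_nonneg' {n : ℕ} {M : Matrix (Fin n) (Fin n) ℂ} (h : M.PosSemidef) :
    0 ≤ M.trace :=
  Finset.sum_nonneg fun i _ => diag_nonneg h i

lemma ptraceA_psd {ρ : Matrix (Fin dA × Fin dB) (Fin dA × Fin dB) ℂ}
    (h : ρ.PosSemidef) : (ptraceA ρ).PosSemidef := by
  refine Matrix.PosSemidef.of_dotProduct_mulVec_nonneg ?_ ?_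
  · ext y y'
    simp only [ptraceA, Matrix.conjTranspose_apply, star_sum]
    refine Finset.sum_congr rfl fun x _ => ?_
    rw [← Matrix.conjTranspose_apply, h.1]
  · intro w
    have key : star w ⬝ᵥ (ptraceA ρ) *ᵥ w
        = ∑ x : Fin dA, star (fun p : Fin dA × Fin dB => if p.1 = x then w p.2 else 0) ⬝ᵥ
            ρ *ᵥ (fun p : Fin dA × Fin dB => if p.1 = x then w p.2 else 0) := by
      simp only [dotProduct, Matrix.mulVec, ptraceA, Pi.star_apply,
        apply_ite (star : ℂ → ℂ), star_zero,
        Fintype.sum_prod_type, ite_mul, mul_ite, zero_mul, mul_zero,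
        Finset.sum_ite_eq, Finset.sum_ite_eq', Finset.mem_univ, if_true,
        Finset.mul_sum, Finset.sum_mul, Finset.sum_ite_irrel, Finset.sum_const_zero]
      exact (Finset.sum_congr rfl fun y _ => Finset.sum_comm).trans Finset.sum_comm
    rw [key]
    exact Finset.sum_nonneg fun x _ => h.dotProduct_mulVec_nonneg _

lemma ptraceB_psd {ρ : Matrix (Fin dA × Fin dB) (Fin dA × Fin dB) ℂ}
    (h : ρ.PosSemidef) : (ptraceB ρ).PosSemidef := by
  refine Matrix.PosSemidef.of_dotProduct_mulVec_nonneg ?_ ?_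
  · ext x x'
    simp only [ptraceB, Matrix.conjTranspose_apply, star_sum]
    refine Finset.sum_congr rfl fun y _ => ?_
    rw [← Matrix.conjTranspose_apply, h.1]
  · intro w
    have key : star w ⬝ᵥ (ptraceB ρ) *ᵥ w
        = ∑ y : Fin dB, star (fun p : Fin dA × Fin dB => if p.2 = y then w p.1 else 0) ⬝ᵥ
            ρ *ᵥ (fun p : Fin dA × Fin dB => if p.2 = y then w p.1 else 0) := by
      simp only [dotProduct, Matrix.mulVec, ptraceB, Pi.star_apply,
        apply_ite (star : ℂ → ℂ), star_zero,
        Fintype.sum_prod_type, ite_mul, mul_ite, zero_mul, mul_zero,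
        Finset.sum_ite_eq, Finset.sum_ite_eq', Finset.mem_univ, if_true,
        Finset.mul_sum, Finset.sum_mul, Finset.sum_ite_irrel, Finset.sum_const_zero]
      exact (Finset.sum_congr rfl fun y _ => Finset.sum_comm).trans Finset.sum_comm
    rw [key]
    exact Finset.sum_nonneg fun x _ => h.dotProduct_mulVec_nonneg _

lemma ptraceA_trace (ρ : Matrix (Fin dA × Fin dB) (Fin dA × Fin dB) ℂ) :
    (ptraceA ρ).trace = ρ.trace := by
  simp only [Matrix.trace, Matrix.diag, ptraceA, Fintype.sum_prod_type]
  exact Finset.sum_comm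

lemma quad_collapse {n : ℕ} (p q : Fin n) (t : ℂ) (X : Fin n → Fin n → ℂ) :
    (∑ a : Fin n, ∑ b : Fin n,
      ((if a = p then (1:ℂ) else 0) + (if a = q then t else 0))
        * (starRingEnd ℂ) ((if b = p then (1:ℂ) else 0) + (if b = q then t else 0)) * X a b)
      = X p p + (starRingEnd ℂ) t * X p q + t * X q p + (t * (starRingEnd ℂ) t) * X q q := by
  simp only [map_add, apply_ite (starRingEnd ℂ), _root_.map_one, map_zero, add_mul, mul_add,
    ite_mul, mul_ite, one_mul, mul_one, zero_mul, mul_zero, Finset.sum_add_distrib,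
    Finset.sum_ite_eq, Finset.sum_ite_eq', Finset.mem_univ, if_true]
  simp only [starRingEnd_apply, star_one]
  ring

lemma single_collapse {n : ℕ} (p : Fin n) (X : Fin n → Fin n → ℂ) :
    (∑ a : Fin n, ∑ b : Fin n,
      (if a = p then (1:ℂ) else 0) * (starRingEnd ℂ) (if b = p then (1:ℂ) else 0) * X a b)
      = X p p := by
  simp [apply_ite (starRingEnd ℂ), ite_mul, mul_ite]


/-- a bipartite density matrix `ρ_AB` is a product `ρ_A ⊗ ρ_B` of its marginals
iff there is a density matrix `σ_B` such that every positive semidefinite `Π` on `A` yields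
`Tr_A[(Π ⊗ I)ρ_AB] = c·σ_B` for some scalar `c ≥ 0`. -/
theorem assisted_work_distillation_stmt1 {dA dB : ℕ}
    (ρ : Matrix (Fin dA × Fin dB) (Fin dA × Fin dB) ℂ) (hρ : IsDensityMatrix ρ) :
    ρ = (ptraceB ρ) ⊗ₖ (ptraceA ρ) ↔
      ∃ σB : Matrix (Fin dB) (Fin dB) ℂ, IsDensityMatrix σB ∧
        ∀ Pi : Matrix (Fin dA) (Fin dA) ℂ, Pi.PosSemidef →
          ∃ c : ℝ, 0 ≤ c ∧
            ptraceA ((Pi ⊗ₖ (1 : Matrix (Fin dB) (Fin dB) ℂ)) * ρ) = c • σB := by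
  constructor
  · intro h
    refine ⟨ptraceA ρ, ⟨ptraceA_psd hρ.1, by rw [ptraceA_trace, hρ.2]⟩, ?_⟩
    intro Pi hPi
    have hval : ∀ (u x : Fin dA) (y y' : Fin dB),
        ρ (u, y) (x, y') = ptraceB ρ u x * ptraceA ρ y y' := by
      intro u x y y'
      conv_lhs => rw [h]
      simp [Matrix.kroneckerMap_apply]
    obtain ⟨B, hB⟩ : ∃ B : Matrix (Fin dA) (Fin dA) ℂ, Pi = Bᴴ * B := by
      open scoped MatrixOrder in exact CStarAlgebra.nonneg_iff_eq_star_mul_self.mp hPi.nonneg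
    have htr : 0 ≤ (Pi * ptraceB ρ).trace := by
      rw [hB, Matrix.mul_assoc, Matrix.trace_mul_comm]
      exact trace_nonneg' ((ptraceB_psd hρ.1).mul_mul_conjTranspose_same B)
    rw [Complex.le_def] at htr
    have htr2 : (Pi * ptraceB ρ).trace = (((Pi * ptraceB ρ).trace).re : ℂ) :=
      Complex.ext rfl (by simpa using htr.2.symm)
    refine ⟨((Pi * ptraceB ρ).trace).re, by simpa using htr.1, ?_⟩
    funext y y'
    rw [ptraceA_expand]
    have key : ∑ x : Fin dA, ∑ u : Fin dA, Pi x u * ρ (u, y) (x, y')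
        = (Pi * ptraceB ρ).trace * ptraceA ρ y y' := by
      simp only [Matrix.trace, Matrix.diag, Matrix.mul_apply, Finset.sum_mul]
      refine Finset.sum_congr rfl fun x _ => Finset.sum_congr rfl fun u _ => ?_
      rw [hval]; ring
    rw [key, htr2]
    simp [Matrix.smul_apply, Complex.real_smul]
  · rintro ⟨σB, hσ, H⟩
    have hGv : ∀ v : Fin dA → ℂ, ∃ z : ℂ, ∀ y y',
        ∑ p : Fin dA, ∑ q : Fin dA,
          v p * (starRingEnd ℂ) (v q) * ρ (q, y) (p, y') = z * σB y y' := by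
      intro v
      obtain ⟨c, hc0, hc⟩ := H (Matrix.vecMulVec v (star v)) (vecMulVec_posSemidef v)
      refine ⟨(c : ℂ), fun y y' => ?_⟩
      calc ∑ p : Fin dA, ∑ q : Fin dA, v p * (starRingEnd ℂ) (v q) * ρ (q, y) (p, y')
          = ptraceA ((Matrix.vecMulVec v (star v) ⊗ₖ (1 : Matrix (Fin dB) (Fin dB) ℂ)) * ρ) y y' := by
            rw [ptraceA_expand]
            simp [Matrix.vecMulVec_apply, Complex.star_def]
        _ = (c • σB) y y' := by rw [hc]
        _ = (c : ℂ) * σB y y' := by simp [Matrix.smul_apply, Complex.real_smul]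
    have hent : ∀ p q : Fin dA, ∃ z : ℂ, ∀ y y', ρ (q, y) (p, y') = z * σB y y' := by
      intro p q
      obtain ⟨z1, h1⟩ := hGv (fun j => (if j = p then (1:ℂ) else 0) + (if j = q then (1:ℂ) else 0))
      obtain ⟨z2, h2⟩ := hGv (fun j => (if j = p then (1:ℂ) else 0) + (if j = q then Complex.I else 0))
      obtain ⟨zp, hp⟩ := hGv (fun j => if j = p then (1:ℂ) else 0)
      obtain ⟨zq, hq⟩ := hGv (fun j => if j = q then (1:ℂ) else 0)
      refine ⟨((z1 - zp - zq) + Complex.I * (z2 - zp - zq)) / 2, fun y y' => ?_⟩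
      have e1 := h1 y y'; have e2 := h2 y y'
      have ep := hp y y'; have eq' := hq y y'
      rw [quad_collapse p q 1 (fun a b => ρ (b, y) (a, y'))] at e1
      rw [quad_collapse p q Complex.I (fun a b => ρ (b, y) (a, y'))] at e2
      rw [single_collapse p (fun a b => ρ (b, y) (a, y'))] at ep
      rw [single_collapse q (fun a b => ρ (b, y) (a, y'))] at eq'
      simp only [starRingEnd_apply, star_one] at e1 e2
      rw [show star Complex.I = -Complex.I from by simp] at e2
      linear_combination (e1 + Complex.I * e2 - (1 + Complex.I) * ep
        - (1 + Complex.I) * eq') / 2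
        + ((ρ (q, y) (p, y') + Complex.I * ρ (q, y) (q, y') - ρ (p, y) (q, y')) / 2) *
          Complex.I_sq
    choose z hz using hent
    have hdiag : ∑ u : Fin dA, z u u = 1 := by
      have key : ρ.trace = (∑ u : Fin dA, z u u) * σB.trace := by
        simp only [Matrix.trace, Matrix.diag, Fintype.sum_prod_type, Finset.sum_mul]
        refine Finset.sum_congr rfl fun u _ => ?_
        rw [Finset.mul_sum]
        exact Finset.sum_congr rfl fun y _ => hz u u y y
      rw [hρ.2, hσ.2, mul_one] at key
      exact key.symm
    have hA : ∀ y y', ptraceA ρ y y' = σB y y' := by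
      intro y y'
      calc ptraceA ρ y y' = ∑ u : Fin dA, z u u * σB y y' :=
            Finset.sum_congr rfl fun u _ => hz u u y y'
        _ = σB y y' := by rw [← Finset.sum_mul, hdiag, one_mul]
    have hB : ∀ x x', ptraceB ρ x x' = z x' x := by
      intro x x'
      calc ptraceB ρ x x' = ∑ y : Fin dB, z x' x * σB y y :=
            Finset.sum_congr rfl fun y _ => hz x' x y y
        _ = z x' x := by
            rw [← Finset.mul_sum, show ∑ y : Fin dB, σB y y = σB.trace from rfl, hσ.2, mul_one]
    funext p p'
    obtain ⟨x, y⟩ := p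
    obtain ⟨x', y'⟩ := p'
    show ρ (x, y) (x', y') = ptraceB ρ x x' * ptraceA ρ y y'
    rw [hB, hA]
    exact hz x' x y y'


end AWD
end
end

section
/- Let ρ_AB be a density matrix on ℂ^{d_A} ⊗ ℂ^{d_B} and γ_B a positive definite density matrix on ℂ^{d_B}. For every POVM {Π_i} on A, with p_i = Tr[(Π_i ⊗ I)ρ_AB] and ρ̃_i = Tr_A[(Π_i ⊗ I)ρ_AB]/p_i (for p_i > 0), one has Σ_{i : p_i > 0} p_i · S(ρ̃_i ‖ γ_B) ≥ S(ρ_B ‖ γ_B). Consequently β·W_a(ρ_AB) ≥ S(ρ_B‖γ_B). -/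
open Matrix BigOperators
open scoped Kronecker ComplexOrder

noncomputable section

namespace AWD

variable {ι a b : Type*} [Fintype ι] [Fintype a] [DecidableEq a] [Fintype b] [DecidableEq b]

variable {n : Type*} [Fintype n] [DecidableEq n]

lemma re_ofReal_mul (r : ℝ) (z : ℂ) : ((r : ℂ) * z).re = r * z.re := by
  simp [Complex.mul_re]

lemma star_mul_self_eig {A : Matrix n n ℂ} (hA : A.IsHermitian) :
    star (hA.eigenvectorUnitary : Matrix n n ℂ) * (hA.eigenvectorUnitary : Matrix n n ℂ) = 1 :=
  Matrix.mem_unitaryGroup_iff'.mp hA.eigenvectorUnitary.2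

lemma mul_star_self_eig {A : Matrix n n ℂ} (hA : A.IsHermitian) :
    (hA.eigenvectorUnitary : Matrix n n ℂ) * star (hA.eigenvectorUnitary : Matrix n n ℂ) = 1 :=
  Matrix.mem_unitaryGroup_iff.mp hA.eigenvectorUnitary.2

lemma trace_eq_sum_eigenvalues {A : Matrix n n ℂ} (hA : A.IsHermitian) :
    A.trace = ∑ i, (hA.eigenvalues i : ℂ) := by
  conv_lhs => rw [hA.spectral_theorem, Unitary.conjStarAlgAut_apply]
  rw [Matrix.trace_mul_cycle, star_mul_self_eig hA, Matrix.one_mul, Matrix.trace_diagonal]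
  rfl

lemma trace_mul_matLog {ρ σ : Matrix n n ℂ} (hρ : ρ.IsHermitian) (hσ : σ.IsHermitian) :
    (ρ * matLog σ).trace = ∑ i, ∑ j,
      ((hρ.eigenvalues i *
          Complex.normSq ((star (hρ.eigenvectorUnitary : Matrix n n ℂ) *
            (hσ.eigenvectorUnitary : Matrix n n ℂ)) i j) *
          Real.log (hσ.eigenvalues j) : ℝ) : ℂ) := by
  set U := (hρ.eigenvectorUnitary : Matrix n n ℂ) with hU
  set V := (hσ.eigenvectorUnitary : Matrix n n ℂ) with hVdef
  set W := star U * V with hW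
  set D := Matrix.diagonal (fun i => (hρ.eigenvalues i : ℂ)) with hD
  set L := Matrix.diagonal (fun j => ((Real.log (hσ.eigenvalues j) : ℝ) : ℂ)) with hL
  have hlog : matLog σ = V * L * star V := by rw [matLog, dif_pos hσ]
  have hsw : star V * U = star W := by rw [hW, StarMul.star_mul, star_star]
  have h3 : Matrix.diagonal (RCLike.ofReal ∘ hρ.eigenvalues) = D := by rw [hD]; rfl
  have h1 : ρ * matLog σ = U * (D * (star U * (V * (L * star V)))) := by
    conv_lhs => rw [hρ.spectral_theorem, Unitary.conjStarAlgAut_apply, h3, hlog, ← hU]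
    simp only [Matrix.mul_assoc]
  rw [h1, Matrix.trace_mul_comm]
  have h2 : D * (star U * (V * (L * star V))) * U = D * (W * (L * star W)) := by
    rw [hW, ← hsw]
    simp only [Matrix.mul_assoc]
  rw [h2, Matrix.trace]
  rw [hD, hL]
  simp only [Matrix.diag_apply, Matrix.mul_apply, Matrix.diagonal_apply,
    Matrix.star_eq_conjTranspose, Matrix.conjTranspose_apply, ite_mul, mul_ite, zero_mul,
    mul_zero, Finset.sum_ite_eq, Finset.sum_ite_eq', Finset.mem_univ, if_true, Finset.mul_sum]
  refine Finset.sum_congr rfl fun i _ => ?_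
  rw [Finset.sum_comm]
  simp only [Finset.sum_ite_eq, Finset.sum_ite_eq', Finset.mem_univ, if_true]
  refine Finset.sum_congr rfl fun j _ => ?_
  have hc : W i j * star (W i j) = (Complex.normSq (W i j) : ℂ) := Complex.mul_conj _
  push_cast
  calc (hρ.eigenvalues i : ℂ) * (W i j * ((Real.log (hσ.eigenvalues j) : ℂ) * star (W i j)))
      = (hρ.eigenvalues i : ℂ) * (W i j * star (W i j)) * (Real.log (hσ.eigenvalues j) : ℂ) := by
        ring
    _ = _ := by rw [hc]

lemma trace_mul_matLog_self {A : Matrix n n ℂ} (hA : A.IsHermitian) :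
    (A * matLog A).trace = ∑ i, ((hA.eigenvalues i * Real.log (hA.eigenvalues i) : ℝ) : ℂ) := by
  rw [trace_mul_matLog hA hA, ]
  rw [star_mul_self_eig hA]
  refine Finset.sum_congr rfl fun i _ => ?_
  rw [Finset.sum_eq_single i]
  · simp [Matrix.one_apply_eq]
  · intro j _ hj
    simp [Matrix.one_apply_ne (Ne.symm hj)]
  · intro h; exact absurd (Finset.mem_univ i) h

lemma sum_normSq_row {W : Matrix n n ℂ} (h : W * Wᴴ = 1) (i : n) :
    ∑ j, Complex.normSq (W i j) = 1 := by
  have h0 : (W * Wᴴ) i i = 1 := by rw [h, Matrix.one_apply_eq]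
  rw [Matrix.mul_apply] at h0
  have h1 : ∀ j, W i j * Wᴴ j i = ((Complex.normSq (W i j) : ℝ) : ℂ) := fun j => by
    rw [Matrix.conjTranspose_apply]; exact Complex.mul_conj _
  rw [Finset.sum_congr rfl (fun j _ => h1 j)] at h0
  exact_mod_cast h0

lemma psd_smul {A : Matrix n n ℂ} (hA : A.PosSemidef) {r : ℝ} (hr : 0 ≤ r) :
    (r • A).PosSemidef := by
  rw [Matrix.posSemidef_iff_dotProduct_mulVec]
  constructor
  · unfold Matrix.IsHermitian
    rw [Matrix.conjTranspose_smul, hA.1.eq]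
    congr 1
  · intro x
    rw [Matrix.smul_mulVec, dotProduct_smul]
    have h0 : (0 : ℂ) ≤ (r : ℂ) := by exact_mod_cast Complex.zero_le_real.mpr hr
    have := hA.dotProduct_mulVec_nonneg x
    calc (0:ℂ) = (r:ℂ) * 0 := by ring
      _ ≤ (r:ℂ) * (dotProduct (star x) (A *ᵥ x)) := by
          exact mul_le_mul_of_nonneg_left this h0
      _ = r • (dotProduct (star x) (A *ᵥ x)) := by
          rw [Complex.real_smul]

lemma psd_sum {ι : Type*} (s : Finset ι) (f : ι → Matrix n n ℂ)
    (h : ∀ i ∈ s, (f i).PosSemidef) : (∑ i ∈ s, f i).PosSemidef := by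
  classical
  induction s using Finset.induction_on with
  | empty => simpa using Matrix.PosSemidef.zero
  | insert a s hx ih =>
      rw [Finset.sum_insert hx]
      exact ((h _ (Finset.mem_insert_self _ _)).add
        (ih fun i hi => h i (Finset.mem_insert_of_mem hi)))

lemma psd_trace_zero {A : Matrix n n ℂ} (hA : A.PosSemidef) (h : A.trace = 0) : A = 0 := by
  have h1 : ∑ i, hA.1.eigenvalues i = 0 := by
    have := trace_eq_sum_eigenvalues hA.1
    rw [h] at this
    exact_mod_cast this.symm
  have h2 : ∀ i ∈ Finset.univ, hA.1.eigenvalues i = 0 :=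
    (Finset.sum_eq_zero_iff_of_nonneg (fun i _ => hA.eigenvalues_nonneg i)).mp h1
  have h3 : Matrix.diagonal (RCLike.ofReal ∘ hA.1.eigenvalues) = (0 : Matrix n n ℂ) := by
    ext i j
    by_cases hij : i = j
    · subst hij; simp [Matrix.diagonal_apply_eq, h2 i (Finset.mem_univ i)]
    · simp [Matrix.diagonal_apply_ne _ hij]
  calc A = _ := hA.1.spectral_theorem
    _ = 0 := by rw [h3]; simp

lemma psd_trace_re_nonneg {A : Matrix n n ℂ} (hA : A.PosSemidef) : 0 ≤ A.trace.re := by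
  rw [trace_eq_sum_eigenvalues hA.1]
  rw [Complex.re_sum]
  exact Finset.sum_nonneg fun i _ => by simpa using hA.eigenvalues_nonneg i

lemma hermitian_trace_mul_real {X Y : Matrix n n ℂ} (hX : X.IsHermitian) (hY : Y.IsHermitian) :
    (X * Y).trace = (((X * Y).trace.re : ℝ) : ℂ) := by
  have h1 : (starRingEnd ℂ) ((X * Y).trace) = (X * Y).trace := by
    have : ((X * Y)ᴴ).trace = star ((X * Y).trace) := Matrix.trace_conjTranspose _
    rw [Matrix.conjTranspose_mul, hX.eq, hY.eq, Matrix.trace_mul_comm] at this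
    exact this.symm
  exact (Complex.conj_eq_iff_re.mp h1).symm


lemma klein_classical {N M : Type*} [Fintype N] [Fintype M]
    (lam : N → ℝ) (mu : M → ℝ) (c : N → M → ℝ)
    (hlam : ∀ i, 0 ≤ lam i) (hmu : ∀ j, 0 ≤ mu j) (hc : ∀ i j, 0 ≤ c i j)
    (hrow : ∀ i, ∑ j, c i j = 1) (hcol : ∀ j, ∑ i, c i j = 1)
    (hslam : ∑ i, lam i = 1) (hsmu : ∑ j, mu j = 1)
    (hsupp : ∀ i j, 0 < lam i → mu j = 0 → c i j = 0) :
    ∑ i, ∑ j, lam i * c i j * Real.log (mu j) ≤ ∑ i, lam i * Real.log (lam i) := by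
  have key : ∀ i j, lam i * c i j - c i j * mu j ≤
      lam i * c i j * (Real.log (lam i) - Real.log (mu j)) := by
    intro i j
    rcases eq_or_lt_of_le (hlam i) with h0 | hpos
    · rw [← h0]
      nlinarith [mul_nonneg (hc i j) (hmu j)]
    · rcases eq_or_lt_of_le (hmu j) with m0 | mpos
      · rw [hsupp i j hpos m0.symm]; simp
      · have hlog : Real.log (mu j) - Real.log (lam i) ≤ mu j / lam i - 1 := by
          have h := Real.log_le_sub_one_of_pos (div_pos mpos hpos)
          rwa [Real.log_div (ne_of_gt mpos) (ne_of_gt hpos)] at h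
        have h2 := mul_le_mul_of_nonneg_left hlog (mul_nonneg (le_of_lt hpos) (hc i j))
        have h3 : lam i * c i j * (mu j / lam i) = c i j * mu j := by
          field_simp
        nlinarith
  have hsum0 : ∑ i, ∑ j, (lam i * c i j - c i j * mu j) = 0 := by
    have e1 : ∑ i, ∑ j, lam i * c i j = 1 := by
      calc ∑ i, ∑ j, lam i * c i j = ∑ i, lam i * ∑ j, c i j := by
            exact Finset.sum_congr rfl fun i _ => (Finset.mul_sum _ _ _).symm
        _ = ∑ i, lam i := by
            exact Finset.sum_congr rfl fun i _ => by rw [hrow i, mul_one]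
        _ = 1 := hslam
    have e2 : ∑ i, ∑ j, c i j * mu j = 1 := by
      rw [Finset.sum_comm]
      calc ∑ j, ∑ i, c i j * mu j = ∑ j, (∑ i, c i j) * mu j := by
            exact Finset.sum_congr rfl fun j _ => (Finset.sum_mul _ _ _).symm
        _ = ∑ j, mu j := by
            exact Finset.sum_congr rfl fun j _ => by rw [hcol j, one_mul]
        _ = 1 := hsmu
    simp only [Finset.sum_sub_distrib]
    rw [e1, e2]
    ring
  have hmain : (0:ℝ) ≤ ∑ i, ∑ j, lam i * c i j * (Real.log (lam i) - Real.log (mu j)) := by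
    rw [← hsum0]
    exact Finset.sum_le_sum fun i _ => Finset.sum_le_sum fun j _ => key i j
  have hexp : ∑ i, ∑ j, lam i * c i j * (Real.log (lam i) - Real.log (mu j)) =
      (∑ i, lam i * Real.log (lam i)) - ∑ i, ∑ j, lam i * c i j * Real.log (mu j) := by
    have e3 : ∀ i, ∑ j, lam i * c i j * Real.log (lam i) = lam i * Real.log (lam i) := by
      intro i
      calc ∑ j, lam i * c i j * Real.log (lam i)
          = (∑ j, c i j) * (lam i * Real.log (lam i)) := by
            rw [Finset.sum_mul]
            exact Finset.sum_congr rfl fun j _ => by ring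
        _ = lam i * Real.log (lam i) := by rw [hrow i, one_mul]
    simp only [mul_sub, Finset.sum_sub_distrib]
    congr 1
    exact Finset.sum_congr rfl fun i _ => e3 i
  linarith [hexp ▸ hmain]


lemma relEnt_nonneg_of_dominated {ρ σ : Matrix n n ℂ} (hρ : ρ.PosSemidef) (hσ : σ.PosSemidef)
    (hρ1 : ρ.trace = 1) (hσ1 : σ.trace = 1) {p : ℝ} (hp : 0 < p)
    (hle : (σ - p • ρ).PosSemidef) : 0 ≤ relEnt ρ σ := by
  set U := (hρ.1.eigenvectorUnitary : Matrix n n ℂ) with hU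
  set V := (hσ.1.eigenvectorUnitary : Matrix n n ℂ) with hV
  set W := star U * V with hW
  set lam := hρ.1.eigenvalues with hlamdef
  set mu := hσ.1.eigenvalues with hmudef
  set c : n → n → ℝ := fun i j => Complex.normSq (W i j) with hcdef
  have hWW : W * Wᴴ = 1 := by
    rw [← Matrix.star_eq_conjTranspose, hW, StarMul.star_mul, star_star]
    calc star U * V * (star V * U) = star U * (V * star V) * U := by
          simp only [Matrix.mul_assoc]
      _ = 1 := by rw [mul_star_self_eig hσ.1, Matrix.mul_one, star_mul_self_eig hρ.1]
  have hWW' : Wᴴ * W = 1 := by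
    rw [← Matrix.star_eq_conjTranspose, hW, StarMul.star_mul, star_star]
    calc star V * U * (star U * V) = star V * (U * star U) * V := by
          simp only [Matrix.mul_assoc]
      _ = 1 := by rw [mul_star_self_eig hρ.1, Matrix.mul_one, star_mul_self_eig hσ.1]
  have hrow : ∀ i, ∑ j, c i j = 1 := fun i => sum_normSq_row hWW i
  have hcol : ∀ j, ∑ i, c i j = 1 := by
    intro j
    have := sum_normSq_row (W := Wᴴ) (by rw [Matrix.conjTranspose_conjTranspose]; exact hWW') j
    simpa [Matrix.conjTranspose_apply, Complex.normSq_conj] using this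
  have hslam : ∑ i, lam i = 1 := by
    have := trace_eq_sum_eigenvalues hρ.1
    rw [hρ1] at this
    exact_mod_cast this.symm
  have hsmu : ∑ j, mu j = 1 := by
    have := trace_eq_sum_eigenvalues hσ.1
    rw [hσ1] at this
    exact_mod_cast this.symm
  -- the support condition
  have hsupp : ∀ i j, 0 < lam i → mu j = 0 → c i j = 0 := by
    intro i j hli hmj
    have hM : (star V * (σ - p • ρ) * V).PosSemidef := by
      have := hle.conjTranspose_mul_mul_same V
      rwa [Matrix.star_eq_conjTranspose]
    have hMjj : 0 ≤ ((star V * (σ - p • ρ) * V) j j).re := by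
      have h0 := hM.dotProduct_mulVec_nonneg (Pi.single j 1)
      have h1 : dotProduct (star (Pi.single j 1))
          ((star V * (σ - p • ρ) * V) *ᵥ Pi.single j 1) = (star V * (σ - p • ρ) * V) j j := by
        simp [Matrix.mulVec, dotProduct, Pi.single_apply, apply_ite (star : ℂ → ℂ),
          Finset.sum_ite_eq, Finset.sum_ite_eq', mul_ite, ite_mul, mul_zero, zero_mul]
      rw [h1] at h0
      simpa using (Complex.le_def.mp h0).1
    have hsig : star V * σ * V = Matrix.diagonal (fun j => (mu j : ℂ)) := by
      have := hσ.1.conjStarAlgAut_star_eigenvectorUnitary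
      rw [Unitary.conjStarAlgAut_apply, Unitary.coe_star, star_star] at this
      rw [this]
      rfl
    have hrhoV : (star V * ρ * V) j j = ((∑ i, lam i * c i j : ℝ) : ℂ) := by
      have hdg : Matrix.diagonal (RCLike.ofReal ∘ hρ.1.eigenvalues)
          = Matrix.diagonal (fun i => (lam i : ℂ)) := rfl
      have h2 : star V * ρ * V = Wᴴ * (Matrix.diagonal (fun i => (lam i : ℂ)) * W) := by
        conv_lhs => rw [hρ.1.spectral_theorem, Unitary.conjStarAlgAut_apply, hdg]
        rw [← Matrix.star_eq_conjTranspose, hW, StarMul.star_mul, star_star, ← hU]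
        simp only [Matrix.mul_assoc]
      rw [h2, Matrix.mul_apply]
      have : ∀ k, Wᴴ j k * (Matrix.diagonal (fun i => (lam i : ℂ)) * W) k j
          = ((lam k * c k j : ℝ) : ℂ) := by
        intro k
        rw [Matrix.conjTranspose_apply, Matrix.diagonal_mul]
        have hc : W k j * star (W k j) = ((c k j : ℝ) : ℂ) := Complex.mul_conj _
        push_cast
        calc star (W k j) * ((lam k : ℂ) * W k j)
            = (lam k : ℂ) * (W k j * star (W k j)) := by ring
          _ = _ := by rw [hc]
      rw [Finset.sum_congr rfl fun k _ => this k]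
      push_cast
      rfl
    have hexpand : star V * (σ - p • ρ) * V
        = Matrix.diagonal (fun j => (mu j : ℂ)) - p • (star V * ρ * V) := by
      rw [Matrix.mul_sub, Matrix.sub_mul, hsig, Matrix.mul_smul, Matrix.smul_mul]
    rw [hexpand] at hMjj
    have hdiagjj : ((Matrix.diagonal (fun j => (mu j : ℂ)) - p • (star V * ρ * V)) j j).re
        = mu j - p * (∑ i, lam i * c i j) := by
      simp only [Matrix.sub_apply, Matrix.diagonal_apply_eq, Matrix.smul_apply, hrhoV]
      rw [Complex.sub_re]
      simp [Complex.real_smul, re_ofReal_mul]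
    rw [hdiagjj, hmj] at hMjj
    have hsum_le : ∑ i, lam i * c i j ≤ 0 := by nlinarith
    have hsum_nonneg : ∀ k ∈ Finset.univ, 0 ≤ lam k * c k j := fun k _ =>
      mul_nonneg (hρ.eigenvalues_nonneg k) (Complex.normSq_nonneg _)
    have hzero : ∑ i, lam i * c i j = 0 :=
      le_antisymm hsum_le (Finset.sum_nonneg hsum_nonneg)
    have := (Finset.sum_eq_zero_iff_of_nonneg hsum_nonneg).mp hzero i (Finset.mem_univ i)
    rcases mul_eq_zero.mp this with h | h
    · exact absurd h (ne_of_gt hli)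
    · exact h
  -- assemble via the classical inequality
  have hcl := klein_classical lam mu c (fun i => hρ.eigenvalues_nonneg i)
    (fun j => hσ.eigenvalues_nonneg j) (fun i j => Complex.normSq_nonneg _)
    hrow hcol hslam hsmu hsupp
  rw [relEnt]
  rw [trace_mul_matLog_self hρ.1, trace_mul_matLog hρ.1 hσ.1]
  rw [Complex.re_sum, Complex.re_sum]
  simp only [Complex.ofReal_re, Complex.re_sum]
  linarith [hcl]


lemma density_tr_log_nonpos {A : Matrix n n ℂ} (hA : A.PosSemidef) (h1 : A.trace = 1) :
    (A * matLog A).trace.re ≤ 0 := by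
  rw [trace_mul_matLog_self hA.1, Complex.re_sum]
  simp only [Complex.ofReal_re]
  have hsum : ∑ i, hA.1.eigenvalues i = 1 := by
    have := trace_eq_sum_eigenvalues hA.1
    rw [h1] at this
    exact_mod_cast this.symm
  refine Finset.sum_nonpos fun i _ => ?_
  have h0 := hA.eigenvalues_nonneg i
  have hle1 : hA.1.eigenvalues i ≤ 1 := by
    calc hA.1.eigenvalues i ≤ ∑ j, hA.1.eigenvalues j :=
          Finset.single_le_sum (fun j _ => hA.eigenvalues_nonneg j) (Finset.mem_univ i)
      _ = 1 := hsum
  have := Real.log_nonpos h0 hle1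
  nlinarith

section PT
variable {α β : Type*} [Fintype α] [DecidableEq α] [Fintype β] [DecidableEq β]

lemma ptraceA_trace_s3 (X : Matrix (α × β) (α × β) ℂ) : (ptraceA X).trace = X.trace := by
  rw [Matrix.trace, Matrix.trace]
  simp only [ptraceA, Matrix.diag_apply, Fintype.sum_prod_type]
  exact Finset.sum_comm

lemma ptraceA_sum {ι : Type*} (s : Finset ι) (f : ι → Matrix (α × β) (α × β) ℂ) :
    ptraceA (∑ i ∈ s, f i) = ∑ i ∈ s, ptraceA (f i) := by
  ext y y'
  simp only [ptraceA, Matrix.sum_apply, Finset.sum_apply]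
  exact Finset.sum_comm

lemma sum_kron_one {ι : Type*} (s : Finset ι) (f : ι → Matrix α α ℂ) :
    (∑ i ∈ s, f i) ⊗ₖ (1 : Matrix β β ℂ) = ∑ i ∈ s, f i ⊗ₖ (1 : Matrix β β ℂ) := by
  ext ⟨a, b⟩ ⟨a', b'⟩
  simp [Matrix.kroneckerMap_apply, Matrix.sum_apply, Finset.sum_mul]

lemma kron_one_isHermitian {M : Matrix α α ℂ} (hM : M.IsHermitian) :
    (M ⊗ₖ (1 : Matrix β β ℂ)).IsHermitian := by
  ext ⟨a, b⟩ ⟨a', b'⟩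
  simp only [Matrix.conjTranspose_apply, Matrix.kroneckerMap_apply, Matrix.one_apply,
    apply_ite (star : ℂ → ℂ), star_one, star_zero, star_mul', mul_ite]
  rw [hM.apply a a']
  by_cases hbb : b = b'
  · subst hbb; simp
  · simp [hbb, Ne.symm hbb]

lemma ptraceA_isHermitian {X : Matrix (α × β) (α × β) ℂ} (hX : X.IsHermitian) :
    (ptraceA X).IsHermitian := by
  ext y y'
  simp only [Matrix.conjTranspose_apply, ptraceA, star_sum]
  exact Finset.sum_congr rfl fun t _ => hX.apply _ _

lemma ptraceA_posSemidef {X : Matrix (α × β) (α × β) ℂ} (hX : X.PosSemidef) :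
    (ptraceA X).PosSemidef := by
  refine Matrix.PosSemidef.of_dotProduct_mulVec_nonneg (ptraceA_isHermitian hX.1) fun x => ?_
  have key : dotProduct (star x) (ptraceA X *ᵥ x)
      = ∑ t : α, dotProduct (star (fun p : α × β => if p.1 = t then x p.2 else 0))
          (X *ᵥ (fun p : α × β => if p.1 = t then x p.2 else 0)) := by
    have hw : ∀ (t s : α) (y : β), (X *ᵥ (fun p : α × β => if p.1 = t then x p.2 else 0)) (s, y)
        = ∑ y', X (s, y) (t, y') * x y' := by
      intro t s y
      show ∑ p : α × β, X (s, y) p * (if p.1 = t then x p.2 else 0) = _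
      rw [Fintype.sum_prod_type]
      rw [Finset.sum_comm]
      simp [mul_ite, Finset.sum_ite_eq, Finset.sum_ite_eq']
    have hdot : ∀ t : α, dotProduct (star (fun p : α × β => if p.1 = t then x p.2 else 0))
            (X *ᵥ (fun p : α × β => if p.1 = t then x p.2 else 0))
        = ∑ y, ∑ y', star (x y) * (X (t, y) (t, y') * x y') := by
      intro t
      rw [dotProduct, Fintype.sum_prod_type]
      rw [Finset.sum_comm]
      simp only [Pi.star_apply, apply_ite (star : ℂ → ℂ), star_zero, ite_mul, zero_mul,
        Finset.sum_ite_eq, Finset.sum_ite_eq', Finset.mem_univ, if_true]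
      exact Finset.sum_congr rfl fun y _ => by rw [hw, Finset.mul_sum]
    rw [Finset.sum_congr rfl fun t _ => hdot t]
    have hL : dotProduct (star x) (ptraceA X *ᵥ x)
        = ∑ y, ∑ y', ∑ t, star (x y) * (X (t, y) (t, y') * x y') := by
      rw [dotProduct]
      refine Finset.sum_congr rfl fun y _ => ?_
      show star (x y) * (∑ y', (∑ t, X (t, y) (t, y')) * x y') = _
      rw [Finset.mul_sum]
      refine Finset.sum_congr rfl fun y' _ => ?_
      rw [Finset.sum_mul, Finset.mul_sum]
    rw [hL]
    rw [Finset.sum_congr rfl fun y (_ : y ∈ Finset.univ) =>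
      (Finset.sum_comm : ∑ y' : β, ∑ t : α, star (x y) * (X (t, y) (t, y') * x y')
        = ∑ t : α, ∑ y' : β, star (x y) * (X (t, y) (t, y') * x y'))]
    exact Finset.sum_comm

  rw [key]
  exact Finset.sum_nonneg fun t _ => hX.dotProduct_mulVec_nonneg _
end PT


section Main
variable {α β : Type*} [Fintype α] [DecidableEq α] [Fintype β] [DecidableEq β]

lemma ptraceA_kron_comm (M : Matrix α α ℂ) (X : Matrix (α × β) (α × β) ℂ) :
    ptraceA ((M ⊗ₖ (1 : Matrix β β ℂ)) * X) = ptraceA (X * (M ⊗ₖ (1 : Matrix β β ℂ))) := by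
  ext y y'
  simp only [ptraceA]
  have hL : ∀ t, ((M ⊗ₖ (1 : Matrix β β ℂ)) * X) (t, y) (t, y')
      = ∑ s, M t s * X (s, y) (t, y') := by
    intro t
    rw [Matrix.mul_apply, Fintype.sum_prod_type]
    refine Finset.sum_congr rfl fun s _ => ?_
    simp [Matrix.kroneckerMap_apply, Matrix.one_apply, ite_mul, mul_ite, mul_zero, zero_mul,
      Finset.sum_ite_eq, Finset.sum_ite_eq']
  have hR : ∀ t, (X * (M ⊗ₖ (1 : Matrix β β ℂ))) (t, y) (t, y')
      = ∑ s, M s t * X (t, y) (s, y') := by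
    intro t
    rw [Matrix.mul_apply, Fintype.sum_prod_type]
    refine Finset.sum_congr rfl fun s _ => ?_
    simp [Matrix.kroneckerMap_apply, Matrix.one_apply, ite_mul, mul_ite, mul_zero, zero_mul,
      Finset.sum_ite_eq, Finset.sum_ite_eq', mul_comm]
  rw [Finset.sum_congr rfl fun t _ => hL t, Finset.sum_congr rfl fun t _ => hR t]
  exact Finset.sum_comm

lemma workSum_key {ι : Type*} [Fintype ι]
    (ρ : Matrix (α × β) (α × β) ℂ) (hρ : IsDensityMatrix ρ)
    (γB : Matrix β β ℂ) (P : POVM ι α) :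
    relEnt (ptraceA ρ) γB ≤ workSum P ρ γB ∧
      workSum P ρ γB ≤ relEnt (ptraceA ρ) γB - ((ptraceA ρ) * matLog (ptraceA ρ)).trace.re := by
  classical
  obtain ⟨hρpsd, hρtr⟩ := hρ
  set σ := ptraceA ρ with hσdef
  have hσpsd : σ.PosSemidef := ptraceA_posSemidef hρpsd
  have hσtr : σ.trace = 1 := by rw [hσdef, ptraceA_trace_s3, hρtr]
  set p : ι → ℝ := povmProb P ρ with hpdef
  set τ : ι → Matrix β β ℂ :=
    fun i => ptraceA ((P.elem i ⊗ₖ (1 : Matrix β β ℂ)) * ρ) with hτdef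
  have hτpsd : ∀ i, (τ i).PosSemidef := by
    intro i
    obtain ⟨S, hS, hSS⟩ : ∃ S : Matrix α α ℂ, S.PosSemidef ∧ S * S = P.elem i := by
      open scoped MatrixOrder in
      exact ⟨CFC.sqrt (P.elem i), (CFC.sqrt_nonneg _).posSemidef,
        CFC.sqrt_mul_sqrt_self _ (P.pos i).nonneg⟩
    set K := S ⊗ₖ (1 : Matrix β β ℂ) with hKdef
    have hKherm : K.IsHermitian := kron_one_isHermitian hS.isHermitian
    have hKK : K * K = P.elem i ⊗ₖ (1 : Matrix β β ℂ) := by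
      rw [hKdef, ← Matrix.mul_kronecker_mul, hSS, Matrix.one_mul]
    have h1 : τ i = ptraceA (K * ρ * Kᴴ) := by
      rw [hτdef]
      show ptraceA ((P.elem i ⊗ₖ (1 : Matrix β β ℂ)) * ρ) = _
      rw [← hKK, Matrix.mul_assoc, ptraceA_kron_comm, hKherm.eq, ← hKdef]
    rw [h1]
    exact ptraceA_posSemidef (hρpsd.mul_mul_conjTranspose_same K)
  have hτtr : ∀ i, (τ i).trace = ((p i : ℝ) : ℂ) := by
    intro i
    rw [hτdef]
    show (ptraceA ((P.elem i ⊗ₖ (1 : Matrix β β ℂ)) * ρ)).trace = _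
    rw [ptraceA_trace_s3]
    exact hermitian_trace_mul_real (kron_one_isHermitian (P.pos i).isHermitian) hρpsd.1
  have hτsum : ∑ i, τ i = σ := by
    rw [hτdef]
    calc ∑ i, ptraceA ((P.elem i ⊗ₖ (1 : Matrix β β ℂ)) * ρ)
        = ptraceA (∑ i, (P.elem i ⊗ₖ (1 : Matrix β β ℂ)) * ρ) := (ptraceA_sum _ _).symm
      _ = ptraceA (((∑ i, P.elem i) ⊗ₖ (1 : Matrix β β ℂ)) * ρ) := by
          rw [sum_kron_one, Finset.sum_mul]
      _ = σ := by rw [P.sum_eq, Matrix.one_kronecker_one, Matrix.one_mul]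
  have hppos : ∀ i, 0 ≤ p i := by
    intro i
    have h1 := psd_trace_re_nonneg (hτpsd i)
    have h2 : (τ i).trace.re = p i := by rw [hτtr i]; simp
    linarith
  have hτ0 : ∀ i, ¬ 0 < p i → τ i = 0 := by
    intro i hi
    have hp0 : p i = 0 := le_antisymm (not_lt.mp hi) (hppos i)
    exact psd_trace_zero (hτpsd i) (by rw [hτtr i, hp0]; simp)
  have hpost : ∀ i, 0 < p i → (p i) • povmPost P ρ i = τ i := by
    intro i hi
    rw [povmPost]
    rw [smul_smul, mul_inv_cancel₀ (ne_of_gt hi), one_smul]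
  have hpostpsd : ∀ i, 0 < p i → (povmPost P ρ i).PosSemidef := by
    intro i hi
    rw [povmPost]
    exact psd_smul (hτpsd i) (inv_nonneg.mpr (hppos i))
  have hposttr : ∀ i, 0 < p i → (povmPost P ρ i).trace = 1 := by
    intro i hi
    rw [povmPost, Matrix.trace_smul, hτtr i, Complex.real_smul, ← Complex.ofReal_mul,
      inv_mul_cancel₀ (ne_of_gt hi)]
    simp
  have hdom : ∀ i, 0 < p i → (σ - (p i) • povmPost P ρ i).PosSemidef := by
    intro i hi
    rw [hpost i hi]
    have h1 : σ - τ i = ∑ j ∈ Finset.univ.erase i, τ j := by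
      have h2 := Finset.add_sum_erase Finset.univ τ (Finset.mem_univ i)
      rw [← hτsum, ← h2, add_sub_cancel_left]
    rw [h1]
    exact psd_sum _ _ fun j _ => hτpsd j
  have hklein : ∀ i, 0 < p i → 0 ≤ relEnt (povmPost P ρ i) σ := fun i hi =>
    relEnt_nonneg_of_dominated (hpostpsd i hi) hσpsd (hposttr i hi) hσtr hi (hdom i hi)
  have hlin : ∀ i, 0 < p i → ∀ M : Matrix β β ℂ,
      ((τ i) * M).trace.re = p i * ((povmPost P ρ i * M).trace.re) := by
    intro i hi M
    rw [← hpost i hi, Matrix.smul_mul, Matrix.trace_smul, Complex.real_smul, re_ofReal_mul]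
  have htrsum : ∀ M : Matrix β β ℂ, ∑ i, ((τ i) * M).trace.re = (σ * M).trace.re := by
    intro M
    calc ∑ i, ((τ i) * M).trace.re = (∑ i, ((τ i) * M).trace).re := (Complex.re_sum _ _).symm
      _ = ((∑ i, (τ i) * M).trace).re := by rw [Matrix.trace_sum]
      _ = (((∑ i, τ i) * M).trace).re := by rw [Finset.sum_mul]
      _ = _ := by rw [hτsum]
  have hsplit : ∀ i, (if 0 < p i then p i * relEnt (povmPost P ρ i) γB else 0)
      = (if 0 < p i then p i * relEnt (povmPost P ρ i) σ else 0)
        + (((τ i) * matLog σ).trace.re - ((τ i) * matLog γB).trace.re) := by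
    intro i
    by_cases hi : 0 < p i
    · simp only [if_pos hi]
      rw [relEnt, relEnt, hlin i hi (matLog σ), hlin i hi (matLog γB)]
      ring
    · simp only [if_neg hi, hτ0 i hi, Matrix.zero_mul, Matrix.trace_zero]
      simp
  have hgsum : ∑ i, (((τ i) * matLog σ).trace.re - ((τ i) * matLog γB).trace.re)
      = relEnt σ γB := by
    rw [relEnt, Finset.sum_sub_distrib, htrsum (matLog σ), htrsum (matLog γB)]
  have hident : workSum P ρ γB = relEnt σ γB
      + ∑ i, (if 0 < p i then p i * relEnt (povmPost P ρ i) σ else 0) := by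
    rw [workSum]
    rw [Finset.sum_congr rfl fun i _ => hsplit i]
    rw [Finset.sum_add_distrib, hgsum]
    ring
  constructor
  · rw [hident]
    have h0 : 0 ≤ ∑ i, (if 0 < p i then p i * relEnt (povmPost P ρ i) σ else 0) := by
      refine Finset.sum_nonneg fun i _ => ?_
      by_cases hi : 0 < p i
      · rw [if_pos hi]; exact mul_nonneg hi.le (hklein i hi)
      · rw [if_neg hi]
    linarith
  · rw [hident]
    have h1 : ∀ i, (if 0 < p i then p i * relEnt (povmPost P ρ i) σ else 0)
        ≤ - ((τ i) * matLog σ).trace.re := by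
      intro i
      by_cases hi : 0 < p i
      · rw [if_pos hi, relEnt, hlin i hi (matLog σ)]
        have h2 : (povmPost P ρ i * matLog (povmPost P ρ i)).trace.re ≤ 0 :=
          density_tr_log_nonpos (hpostpsd i hi) (hposttr i hi)
        nlinarith [hlin i hi (matLog (povmPost P ρ i)), hi.le]
      · rw [if_neg hi, hτ0 i hi, Matrix.zero_mul, Matrix.trace_zero]
        simp
    have h3 : ∑ i, (if 0 < p i then p i * relEnt (povmPost P ρ i) σ else 0)
        ≤ ∑ i, - ((τ i) * matLog σ).trace.re := Finset.sum_le_sum fun i _ => h1 i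
    have h4 : ∑ i, - ((τ i) * matLog σ).trace.re = - (σ * matLog σ).trace.re := by
      rw [Finset.sum_neg_distrib, htrsum (matLog σ)]
    linarith [h4 ▸ h3]
end Main


/-- for every POVM on Alice's side,
`Σ_{i : p_i>0} p_i S(ρ̃_i‖γ_B) ≥ S(ρ_B‖γ_B)`; consequently `β·W_a(ρ_AB) ≥ S(ρ_B‖γ_B)`. -/
theorem assisted_work_distillation_stmt3 {dA dB : ℕ}
    (ρ : Matrix (Fin dA × Fin dB) (Fin dA × Fin dB) ℂ) (hρ : IsDensityMatrix ρ)
    (γB : Matrix (Fin dB) (Fin dB) ℂ) (hγB : IsDensityMatrix γB) (hγBpd : γB.PosDef)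
    (β : ℝ) (hβ : 0 < β) :
    (∀ (ι : Type) (_ : Fintype ι) (P : POVM ι (Fin dA)),
        relEnt (ptraceA ρ) γB ≤ workSum P ρ γB) ∧
      relEnt (ptraceA ρ) γB ≤ β * Wa ρ γB β := by
  constructor
  · intro ι inst P
    exact (workSum_key ρ hρ γB P).1
  · set C := relEnt (ptraceA ρ) γB - ((ptraceA ρ) * matLog (ptraceA ρ)).trace.re with hC
    have hβ' : 0 < 1 / β := by positivity
    have hbound : ∀ (k : ℕ) (P : POVM (Fin k) (Fin dA)),
        (1 / β) * workSum P ρ γB ≤ (1 / β) * C := fun k P =>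
      mul_le_mul_of_nonneg_left (workSum_key ρ hρ γB P).2 hβ'.le
    have hinner : ∀ k : ℕ, BddAbove (Set.range fun P : POVM (Fin k) (Fin dA) =>
        (1 / β) * workSum P ρ γB) := fun k =>
      ⟨(1 / β) * C, by rintro _ ⟨P, rfl⟩; exact hbound k P⟩
    have houter : BddAbove (Set.range fun k : ℕ =>
        ⨆ P : POVM (Fin k) (Fin dA), (1 / β) * workSum P ρ γB) := by
      refine ⟨max ((1 / β) * C) 0, ?_⟩
      rintro _ ⟨k, rfl⟩
      by_cases hne : Nonempty (POVM (Fin k) (Fin dA))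
      · exact le_max_of_le_left (ciSup_le fun P => hbound k P)
      · rw [not_nonempty_iff] at hne
        show (⨆ P : POVM (Fin k) (Fin dA), (1 / β) * workSum P ρ γB) ≤ max ((1 / β) * C) 0
        rw [show (⨆ P : POVM (Fin k) (Fin dA), (1 / β) * workSum P ρ γB)
            = sSup (Set.range fun P : POVM (Fin k) (Fin dA) => (1 / β) * workSum P ρ γB)
            from rfl, Set.range_eq_empty, Real.sSup_empty]
        exact le_max_right _ _
    set P1 : POVM (Fin 1) (Fin dA) := ⟨fun _ => 1, fun _ => Matrix.PosSemidef.one, by simp⟩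
      with hP1
    have h1 : (1 / β) * workSum P1 ρ γB ≤ Wa ρ γB β :=
      le_trans (le_ciSup (hinner 1) P1) (le_ciSup houter 1)
    have h2 := (workSum_key ρ hρ γB P1).1
    have h3 : β * ((1 / β) * workSum P1 ρ γB) = workSum P1 ρ γB := by
      field_simp
    calc relEnt (ptraceA ρ) γB ≤ workSum P1 ρ γB := h2
      _ = β * ((1 / β) * workSum P1 ρ γB) := h3.symm
      _ ≤ β * Wa ρ γB β := mul_le_mul_of_nonneg_left h1 hβ.le

end AWD
end
end

section
/- Let φ_AB = |φ⟩⟨φ| be a pure density matrix on ℂ^{d_A} ⊗ ℂ^{d_B}, with reduced states ρ_A = Tr_B[φ_AB] and ρ_B = Tr_A[φ_AB], and let γ_B be a positive definite density matrix on ℂ^{d_B}. Then S(φ_AB ‖ ρ_A ⊗ γ_B) = S(ρ_B ‖ γ_B) + 2·S(ρ_B); equivalently, the relative entropy of collaboration satisfies β·W_r(φ_AB) = S(ρ_B‖γ_B) + 2S(ρ_B). -/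
open Matrix BigOperators
open scoped Kronecker ComplexOrder

noncomputable section

namespace AWD

variable {ι a b : Type*} [Fintype ι] [Fintype a] [DecidableEq a] [Fintype b] [DecidableEq b]

section Helpers

variable {n m : Type*} [Fintype n] [DecidableEq n] [Fintype m] [DecidableEq m]

lemma matLog_mulVec {σ : Matrix n n ℂ} (hσ : σ.IsHermitian) {w : n → ℂ} {t : ℝ}
    (hw : σ *ᵥ w = (t : ℂ) • w) :
    matLog σ *ᵥ w = ((Real.log t : ℝ) : ℂ) • w := by
  have hU1 : (hσ.eigenvectorUnitary : Matrix n n ℂ) * star (hσ.eigenvectorUnitary : Matrix n n ℂ) = 1 :=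
    Matrix.mem_unitaryGroup_iff.mp hσ.eigenvectorUnitary.2
  have hU2 : star (hσ.eigenvectorUnitary : Matrix n n ℂ) * (hσ.eigenvectorUnitary : Matrix n n ℂ) = 1 :=
    Matrix.mem_unitaryGroup_iff'.mp hσ.eigenvectorUnitary.2
  set U : Matrix n n ℂ := (hσ.eigenvectorUnitary : Matrix n n ℂ) with hUdef
  set c : n → ℂ := star U *ᵥ w with hc
  have hspec2 : σ = U * Matrix.diagonal (RCLike.ofReal ∘ hσ.eigenvalues) * star U :=
    hσ.spectral_theorem
  have hkey : ∀ k, (hσ.eigenvalues k : ℂ) * c k = (t : ℂ) * c k := by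
    have h2 : star U * σ = Matrix.diagonal (RCLike.ofReal ∘ hσ.eigenvalues) * star U := by
      conv_lhs => rw [hspec2]
      rw [← Matrix.mul_assoc, ← Matrix.mul_assoc, hU2, Matrix.one_mul]
    have h1 : Matrix.diagonal (RCLike.ofReal ∘ hσ.eigenvalues) *ᵥ c = (t : ℂ) • c := by
      have h3 : star U *ᵥ (σ *ᵥ w) = star U *ᵥ ((t : ℂ) • w) := by rw [hw]
      rw [Matrix.mulVec_smul, Matrix.mulVec_mulVec, h2, ← Matrix.mulVec_mulVec] at h3
      exact h3
    intro k
    have := congrFun h1 k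
    simpa [Matrix.mulVec_diagonal] using this
  have hlog : Matrix.diagonal (fun i => (Real.log (hσ.eigenvalues i) : ℂ)) *ᵥ c
      = ((Real.log t : ℝ) : ℂ) • c := by
    funext k
    simp only [Matrix.mulVec_diagonal, Pi.smul_apply, smul_eq_mul]
    by_cases hck : c k = 0
    · simp [hck]
    · have : (hσ.eigenvalues k : ℂ) = (t : ℂ) := mul_right_cancel₀ hck (hkey k)
      have ht : hσ.eigenvalues k = t := by exact_mod_cast this
      rw [ht]
  have : matLog σ = U * Matrix.diagonal (fun i => (Real.log (hσ.eigenvalues i) : ℂ)) * star U := by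
    simp only [matLog, dif_pos hσ]
    rfl
  rw [this, ← Matrix.mulVec_mulVec, ← Matrix.mulVec_mulVec, ← hc, hlog,
    Matrix.mulVec_smul]
  congr 1
  rw [hc, Matrix.mulVec_mulVec, hU1, Matrix.one_mulVec]

lemma matLog_mul_of_eig {σ : Matrix n n ℂ} (hσ : σ.IsHermitian) (N : Matrix n m ℂ) (d : m → ℝ)
    (h : σ * N = N * Matrix.diagonal (fun j => (d j : ℂ))) :
    matLog σ * N = N * Matrix.diagonal (fun j => ((Real.log (d j) : ℝ) : ℂ)) := by
  ext i j
  have hw : σ *ᵥ (fun k => N k j) = ((d j : ℝ) : ℂ) • (fun k => N k j) := by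
    funext k
    have := congrFun (congrFun h k) j
    simp only [Matrix.mul_apply, Matrix.diagonal_apply] at this ⊢
    simp only [Matrix.mulVec, dotProduct, Pi.smul_apply, smul_eq_mul]
    rw [this]
    rw [Finset.sum_eq_single j] <;> simp +contextual [mul_comm]
  have := congrFun (matLog_mulVec hσ hw) i
  simp only [Matrix.mulVec, dotProduct, Pi.smul_apply, smul_eq_mul] at this
  simp only [Matrix.mul_apply, Matrix.diagonal_apply]
  rw [Finset.sum_eq_single j] <;> simp_all [mul_comm, Matrix.mul_apply]

omit [DecidableEq n] in
lemma trace_vecMulVec_mul (u v : n → ℂ) (L : Matrix n n ℂ) :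
    (Matrix.vecMulVec u v * L).trace = v ⬝ᵥ (L *ᵥ u) := by
  simp only [Matrix.trace, Matrix.diag_apply, Matrix.mul_apply, Matrix.vecMulVec_apply,
    dotProduct, Matrix.mulVec, Finset.mul_sum]
  rw [Finset.sum_comm]
  congr 1; ext k; congr 1; ext i; ring

omit [Fintype n] [DecidableEq n] in
lemma kron_conjTranspose {l l' n' : Type*} (A : Matrix n n' ℂ) (B : Matrix l l' ℂ) :
    (A ⊗ₖ B)ᴴ = Aᴴ ⊗ₖ Bᴴ := by
  ext ⟨i, j⟩ ⟨k, o⟩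
  simp [Matrix.conjTranspose_apply, mul_comm]

omit [Fintype n] [DecidableEq n] in
lemma transpose_conjT {n' : Type*} (A : Matrix n n' ℂ) : Aᵀᴴ = Aᴴᵀ := by
  ext i j; simp [Matrix.conjTranspose_apply]

lemma matLog_unitary_conj {W : Matrix n n ℂ} (hW1 : W * Wᴴ = 1) (hW2 : Wᴴ * W = 1) (d : n → ℝ) :
    matLog (W * Matrix.diagonal (fun i => (d i : ℂ)) * Wᴴ)
      = W * Matrix.diagonal (fun i => ((Real.log (d i) : ℝ) : ℂ)) * Wᴴ := by
  set σ := W * Matrix.diagonal (fun i => (d i : ℂ)) * Wᴴ with hσdef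
  have hσ : σ.IsHermitian := by
    unfold Matrix.IsHermitian
    rw [hσdef]
    rw [Matrix.conjTranspose_mul, Matrix.conjTranspose_mul, Matrix.conjTranspose_conjTranspose,
      Matrix.diagonal_conjTranspose]
    have : star (fun i => ((d i : ℝ) : ℂ)) = fun i => ((d i : ℝ) : ℂ) := by
      funext i; simp
    rw [this, Matrix.mul_assoc]
  have h : σ * W = W * Matrix.diagonal (fun i => (d i : ℂ)) := by
    rw [hσdef, Matrix.mul_assoc, hW2, Matrix.mul_one]
  have h2 := matLog_mul_of_eig hσ W d h
  calc matLog σ = matLog σ * (W * Wᴴ) := by rw [hW1, Matrix.mul_one]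
    _ = (matLog σ * W) * Wᴴ := by rw [Matrix.mul_assoc]
    _ = W * Matrix.diagonal (fun i => ((Real.log (d i) : ℝ) : ℂ)) * Wᴴ := by rw [h2]

omit [DecidableEq n] in
lemma trace_mul_diagonal (X : Matrix n n ℂ) (e : n → ℂ) [DecidableEq n] :
    (X * Matrix.diagonal e).trace = ∑ j, X j j * e j := by
  simp only [Matrix.trace, Matrix.diag_apply, Matrix.mul_apply]
  congr 1; ext j
  rw [Finset.sum_eq_single j] <;> simp +contextual [Matrix.diagonal_apply]

end Helpers

/-- for a pure state `φ_AB = |φ⟩⟨φ|`,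
`S(φ_AB‖ρ_A⊗γ_B) = S(ρ_B‖γ_B) + 2·S(ρ_B)`; equivalently
`β·W_r(φ_AB) = S(ρ_B‖γ_B) + 2·S(ρ_B)`. -/
theorem assisted_work_distillation_stmt16 {dA dB : ℕ}
    (φ : Fin dA × Fin dB → ℂ) (hφ : ∑ x, Complex.normSq (φ x) = 1)
    (φAB : Matrix (Fin dA × Fin dB) (Fin dA × Fin dB) ℂ)
    (hφAB : φAB = Matrix.vecMulVec φ (star φ))
    (γB : Matrix (Fin dB) (Fin dB) ℂ) (hγB : IsDensityMatrix γB) (hγBpd : γB.PosDef) :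
    relEnt φAB ((ptraceB φAB) ⊗ₖ γB)
      = relEnt (ptraceA φAB) γB + 2 * vN (ptraceA φAB) := by
  classical
  set M : Matrix (Fin dA) (Fin dB) ℂ := Matrix.of (fun x y => φ (x, y)) with hMdef
  have hρA : ptraceB φAB = M * Mᴴ := by
    ext x x'
    simp [ptraceB, hφAB, Matrix.mul_apply, Matrix.vecMulVec_apply, Matrix.conjTranspose_apply,
      hMdef]
  have hρB : ptraceA φAB = Mᵀ * Mᵀᴴ := by
    ext y y'
    simp [ptraceA, hφAB, Matrix.mul_apply, Matrix.vecMulVec_apply, Matrix.conjTranspose_apply,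
      hMdef]
  have hApsd : (M * Mᴴ).PosSemidef := Matrix.posSemidef_self_mul_conjTranspose M
  have hAh : (M * Mᴴ).IsHermitian := hApsd.1
  have hBpsd : (Mᵀ * Mᵀᴴ).PosSemidef := Matrix.posSemidef_self_mul_conjTranspose Mᵀ
  have hBh : (Mᵀ * Mᵀᴴ).IsHermitian := hBpsd.1
  have hγh : γB.IsHermitian := hγBpd.1
  set lam : Fin dA → ℝ := hAh.eigenvalues with hlamdef
  set mu : Fin dB → ℝ := hγh.eigenvalues with hmudef
  set U : Matrix (Fin dA) (Fin dA) ℂ := (hAh.eigenvectorUnitary : Matrix (Fin dA) (Fin dA) ℂ)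
    with hUdef
  set V : Matrix (Fin dB) (Fin dB) ℂ := (hγh.eigenvectorUnitary : Matrix (Fin dB) (Fin dB) ℂ)
    with hVdef
  have hU1 : U * Uᴴ = 1 := Matrix.mem_unitaryGroup_iff.mp hAh.eigenvectorUnitary.2
  have hU2 : Uᴴ * U = 1 := Matrix.mem_unitaryGroup_iff'.mp hAh.eigenvectorUnitary.2
  have hV1 : V * Vᴴ = 1 := Matrix.mem_unitaryGroup_iff.mp hγh.eigenvectorUnitary.2
  have hV2 : Vᴴ * V = 1 := Matrix.mem_unitaryGroup_iff'.mp hγh.eigenvectorUnitary.2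
  set DA : Matrix (Fin dA) (Fin dA) ℂ := Matrix.diagonal (fun i => ((lam i : ℝ) : ℂ)) with hDAdef
  have hAspec : M * Mᴴ = U * DA * Uᴴ := hAh.spectral_theorem
  have hAdiag : Uᴴ * (M * Mᴴ) * U = DA := by
    rw [hAspec]; simp only [← Matrix.mul_assoc, hU2, Matrix.one_mul]
    rw [Matrix.mul_assoc, hU2, Matrix.mul_one]
  have hγspec : γB = V * Matrix.diagonal (fun j => ((mu j : ℝ) : ℂ)) * Vᴴ := hγh.spectral_theorem
  -- cancellation helpers
  have hcUU : ∀ {p : Type} [Fintype p] (X : Matrix (Fin dA) p ℂ), U * (Uᴴ * X) = X := by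
    intro p _ X; rw [← Matrix.mul_assoc, hU1, Matrix.one_mul]
  have hcUtU : ∀ {p : Type} [Fintype p] (X : Matrix (Fin dA) p ℂ), Uᴴᵀ * (Uᵀ * X) = X := by
    intro p _ X
    rw [← Matrix.mul_assoc, ← Matrix.transpose_mul, hU1, Matrix.transpose_one, Matrix.one_mul]
  have hcUtU' : ∀ {p : Type} [Fintype p] (X : Matrix (Fin dA) p ℂ), Uᵀ * (Uᴴᵀ * X) = X := by
    intro p _ X
    rw [← Matrix.mul_assoc, ← Matrix.transpose_mul, hU2, Matrix.transpose_one, Matrix.one_mul]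
  have hcVcVt : ∀ {p : Type} [Fintype p] (X : Matrix (Fin dB) p ℂ), Vᴴᵀ * (Vᵀ * X) = X := by
    intro p _ X
    rw [← Matrix.mul_assoc, ← Matrix.transpose_mul, hV1, Matrix.transpose_one, Matrix.one_mul]
  -- Part 1 : Tr[φAB log φAB] = 0
  have hφh : φAB.IsHermitian := by
    rw [hφAB]
    ext p q
    simp [Matrix.conjTranspose_apply, Matrix.vecMulVec_apply, mul_comm]
  have hw1 : φAB *ᵥ φ = ((1 : ℝ) : ℂ) • φ := by
    rw [hφAB]; funext p
    simp only [Matrix.mulVec, dotProduct, Matrix.vecMulVec_apply, Pi.star_apply,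
      Pi.smul_apply, smul_eq_mul, Complex.ofReal_one, one_mul, Complex.star_def]
    calc ∑ q, φ p * (starRingEnd ℂ) (φ q) * φ q
        = φ p * ∑ q, ((Complex.normSq (φ q) : ℝ) : ℂ) := by
          rw [Finset.mul_sum]
          refine Finset.sum_congr rfl fun q _ => ?_
          rw [Complex.normSq_eq_conj_mul_self]; ring
      _ = φ p * ((∑ q, Complex.normSq (φ q) : ℝ) : ℂ) := by norm_cast
      _ = φ p := by rw [hφ]; simp
  have hT1 : (φAB * matLog φAB).trace = 0 := by
    have h := matLog_mulVec hφh hw1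
    rw [Real.log_one] at h
    conv_lhs => rw [hφAB]
    rw [trace_vecMulVec_mul, ← hφAB, h]
    simp
  -- Part 2 : Tr[ρB log ρB] = ∑ lam log lam
  set N : Matrix (Fin dB) (Fin dA) ℂ := Mᵀ * Uᴴᵀ with hNdef
  have hNH : Nᴴ = Uᵀ * Mᵀᴴ := by
    rw [hNdef, Matrix.conjTranspose_mul, transpose_conjT Uᴴ, Matrix.conjTranspose_conjTranspose]
  have hMt : Mᵀᴴ * Mᵀ = (M * Mᴴ)ᵀ := by
    rw [Matrix.transpose_mul, transpose_conjT]
  have hDAU : Uᴴ * (M * Mᴴ) = DA * Uᴴ := by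
    conv_lhs => rw [hAspec]
    rw [← Matrix.mul_assoc, ← Matrix.mul_assoc, hU2, Matrix.one_mul]
  have hXt : (M * Mᴴ)ᵀ * Uᴴᵀ = Uᴴᵀ * DA := by
    rw [← Matrix.transpose_mul, hDAU, Matrix.transpose_mul, hDAdef, Matrix.diagonal_transpose]
  have hNNH : N * Nᴴ = Mᵀ * Mᵀᴴ := by
    rw [hNdef, hNH]
    simp only [Matrix.mul_assoc]
    rw [hcUtU]
  have heigB : (Mᵀ * Mᵀᴴ) * N = N * DA := by
    rw [hNdef]
    simp only [Matrix.mul_assoc]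
    rw [← Matrix.mul_assoc Mᵀᴴ, hMt, hXt, ← Matrix.mul_assoc]
  have hNHN : Nᴴ * N = DA := by
    rw [hNH, hNdef]
    simp only [Matrix.mul_assoc]
    rw [← Matrix.mul_assoc Mᵀᴴ, hMt, hXt, hcUtU']
  have hlogB : matLog (Mᵀ * Mᵀᴴ) * N
      = N * Matrix.diagonal (fun j => ((Real.log (lam j) : ℝ) : ℂ)) :=
    matLog_mul_of_eig hBh N lam (by rw [heigB, hDAdef])
  set SA : ℝ := ∑ i, lam i * Real.log (lam i) with hSAdef
  have hT2 : ((Mᵀ * Mᵀᴴ) * matLog (Mᵀ * Mᵀᴴ)).trace = ((SA : ℝ) : ℂ) := by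
    calc ((Mᵀ * Mᵀᴴ) * matLog (Mᵀ * Mᵀᴴ)).trace
        = ((N * Nᴴ) * matLog (Mᵀ * Mᵀᴴ)).trace := by rw [hNNH]
      _ = ((Nᴴ * matLog (Mᵀ * Mᵀᴴ)) * N).trace := by
          rw [Matrix.mul_assoc, Matrix.trace_mul_comm]
      _ = (Nᴴ * (N * Matrix.diagonal (fun j => ((Real.log (lam j) : ℝ) : ℂ)))).trace := by
          rw [Matrix.mul_assoc, hlogB]
      _ = (DA * Matrix.diagonal (fun j => ((Real.log (lam j) : ℝ) : ℂ))).trace := by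
          rw [← Matrix.mul_assoc, hNHN]
      _ = ((SA : ℝ) : ℂ) := by
          rw [hDAdef, Matrix.diagonal_mul_diagonal, Matrix.trace_diagonal, hSAdef]
          push_cast; ring
  -- Part 3 : Tr[ρB log γB]
  have hLγ : matLog γB = V * Matrix.diagonal (fun j => ((Real.log (mu j) : ℝ) : ℂ)) * Vᴴ := by
    simp only [matLog, dif_pos hγh]
    rw [← hVdef, ← hmudef]
    rfl
  set C : Matrix (Fin dA) (Fin dB) ℂ := Uᴴ * M * Vᴴᵀ with hCdef
  have hCH : Cᴴ = Vᵀ * (Mᴴ * U) := by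
    rw [hCdef, Matrix.conjTranspose_mul, Matrix.conjTranspose_mul,
      Matrix.conjTranspose_conjTranspose, transpose_conjT Vᴴ,
      Matrix.conjTranspose_conjTranspose]
  have hCC : C * Cᴴ = DA := by
    rw [hCdef, hCH]
    simp only [Matrix.mul_assoc]
    rw [hcVcVt]
    have := hAdiag
    simp only [Matrix.mul_assoc] at this
    exact this
  have hCHC : Cᴴ * C = (Vᴴ * (Mᵀ * Mᵀᴴ) * V)ᵀ := by
    rw [hCH, hCdef]
    simp only [Matrix.transpose_mul, transpose_conjT, Matrix.transpose_transpose,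
      Matrix.mul_assoc]
    rw [hcUU]
  have hXdiag : ∀ j, (Vᴴ * (Mᵀ * Mᵀᴴ) * V) j j = ((∑ i, Complex.normSq (C i j) : ℝ) : ℂ) := by
    intro j
    have h := congrFun (congrFun hCHC j) j
    rw [Matrix.transpose_apply] at h
    rw [← h]
    simp only [Matrix.mul_apply, Matrix.conjTranspose_apply]
    push_cast
    refine Finset.sum_congr rfl fun i _ => ?_
    rw [Complex.normSq_eq_conj_mul_self, Complex.star_def]
  have ha : ∀ i, ∑ j, Complex.normSq (C i j) = lam i := by
    intro i
    have h := congrFun (congrFun hCC i) i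
    simp only [Matrix.mul_apply, Matrix.conjTranspose_apply, hDAdef,
      Matrix.diagonal_apply_eq] at h
    have h2 : ((∑ j, Complex.normSq (C i j) : ℝ) : ℂ) = ((lam i : ℝ) : ℂ) := by
      push_cast
      rw [← h]
      refine Finset.sum_congr rfl fun j _ => ?_
      rw [← Complex.mul_conj, Complex.star_def]
    exact_mod_cast h2
  set T5r : ℝ := ∑ j, (∑ i, Complex.normSq (C i j)) * Real.log (mu j) with hT5rdef
  have hT5 : ((Mᵀ * Mᵀᴴ) * matLog γB).trace = ((T5r : ℝ) : ℂ) := by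
    rw [hLγ, ← Matrix.mul_assoc, Matrix.trace_mul_comm, ← Matrix.mul_assoc, ← Matrix.mul_assoc,
      trace_mul_diagonal, hT5rdef]
    push_cast
    refine Finset.sum_congr rfl fun j _ => ?_
    rw [hXdiag j]
    push_cast; ring
  -- Part 4 : Tr[φAB log (ρA ⊗ γB)]
  set d : Fin dA × Fin dB → ℝ := fun p => lam p.1 * mu p.2 with hddef
  set W : Matrix (Fin dA × Fin dB) (Fin dA × Fin dB) ℂ := U ⊗ₖ V with hWdef
  have hWH : Wᴴ = Uᴴ ⊗ₖ Vᴴ := kron_conjTranspose U V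
  have hW1 : W * Wᴴ = 1 := by
    rw [hWdef, hWH, ← Matrix.mul_kronecker_mul, hU1, hV1, Matrix.one_kronecker_one]
  have hW2 : Wᴴ * W = 1 := by
    rw [hWdef, hWH, ← Matrix.mul_kronecker_mul, hU2, hV2, Matrix.one_kronecker_one]
  have hKspec : (M * Mᴴ) ⊗ₖ γB = W * Matrix.diagonal (fun p => ((d p : ℝ) : ℂ)) * Wᴴ := by
    rw [hAspec, hγspec, Matrix.mul_kronecker_mul, Matrix.mul_kronecker_mul, hWH, hWdef, hDAdef,
      Matrix.diagonal_kronecker_diagonal]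
    congr 2
    funext p
    rw [hddef]
    push_cast; ring
  have hL : matLog ((M * Mᴴ) ⊗ₖ γB)
      = W * Matrix.diagonal (fun p => ((Real.log (d p) : ℝ) : ℂ)) * Wᴴ := by
    rw [hKspec]
    exact matLog_unitary_conj hW1 hW2 d
  set c : Fin dA × Fin dB → ℂ := Wᴴ *ᵥ φ with hcdef
  have hT4 : (φAB * matLog ((M * Mᴴ) ⊗ₖ γB)).trace
      = ∑ p, star (c p) * (((Real.log (d p) : ℝ) : ℂ) * c p) := by
    conv_lhs => rw [hφAB]
    rw [trace_vecMulVec_mul, hL, ← Matrix.mulVec_mulVec, ← Matrix.mulVec_mulVec,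
      Matrix.dotProduct_mulVec]
    have hsc : star φ ᵥ* W = star c := by
      rw [hcdef, Matrix.star_mulVec, Matrix.conjTranspose_conjTranspose]
    rw [hsc]
    simp [dotProduct, Matrix.mulVec_diagonal]
    rfl
  have hcC : ∀ p : Fin dA × Fin dB, c p = C p.1 p.2 := by
    intro ⟨i, j⟩
    rw [hcdef, hCdef]
    simp only [Matrix.mulVec, dotProduct, Matrix.mul_apply, Matrix.conjTranspose_apply,
      Matrix.transpose_apply, hWdef, Matrix.kroneckerMap_apply, hMdef, Matrix.of_apply]
    rw [Fintype.sum_prod_type, Finset.sum_comm]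
    refine Finset.sum_congr rfl fun y _ => ?_
    rw [Finset.sum_mul]
    refine Finset.sum_congr rfl fun x _ => ?_
    simp only [Pi.star_apply, Complex.star_def, _root_.map_mul]
    ring
  have hrow : ∀ i, ∑ j, Real.log (lam i * mu j) * Complex.normSq (C i j)
      = lam i * Real.log (lam i) + ∑ j, Real.log (mu j) * Complex.normSq (C i j) := by
    intro i
    have hnn : 0 ≤ lam i := hApsd.eigenvalues_nonneg i
    rcases eq_or_lt_of_le hnn with h0 | hpos
    · have h0' : lam i = 0 := h0.symm
      have hz : ∀ j, Complex.normSq (C i j) = 0 := by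
        intro j
        have hs := ha i
        rw [h0'] at hs
        exact (Finset.sum_eq_zero_iff_of_nonneg
          (fun j _ => Complex.normSq_nonneg (C i j))).mp hs j (Finset.mem_univ j)
      simp [hz, h0']
    · have hne : lam i ≠ 0 := ne_of_gt hpos
      have hlog : ∀ j, Real.log (lam i * mu j) = Real.log (lam i) + Real.log (mu j) := fun j =>
        Real.log_mul hne (ne_of_gt (hγBpd.eigenvalues_pos j))
      simp only [hlog, add_mul]
      rw [Finset.sum_add_distrib, ← Finset.mul_sum, ha i]
      ring
  have hkeyreal : (∑ p : Fin dA × Fin dB, Real.log (d p) * Complex.normSq (C p.1 p.2))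
      = SA + T5r := by
    rw [hddef, Fintype.sum_prod_type]
    simp only [hrow]
    rw [Finset.sum_add_distrib, hSAdef, hT5rdef]
    congr 1
    rw [Finset.sum_comm]
    refine Finset.sum_congr rfl fun j _ => ?_
    rw [Finset.sum_mul]
    refine Finset.sum_congr rfl fun i _ => ?_
    ring
  have hT4' : (φAB * matLog ((M * Mᴴ) ⊗ₖ γB)).trace = (((SA + T5r : ℝ)) : ℂ) := by
    rw [hT4, ← hkeyreal]
    push_cast
    refine Finset.sum_congr rfl fun p _ => ?_
    rw [hcC p]
    rw [Complex.normSq_eq_conj_mul_self, Complex.star_def]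
    push_cast
    ring
  -- final assembly
  simp only [relEnt, vN, hρA, hρB]
  rw [hT1, hT2, hT5, hT4']
  simp only [Complex.zero_re, Complex.ofReal_re]
  ring

end AWD
end
end
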